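/- Let X be a compact Hausdorff space, U ⊆ X clopen, and σ : U → X continuous and injective with σ(U) open. Then the map Φ : X̃ → X, Φ(x_0, x_1, ...) = x_0, from the σ-extension X̃ to X is a homeomorphism. -/

import Mathlib

/-- The `σ`-extension `X̃` of a partial dynamical system `σ : U → X`: sequences in
`(X ⊔ {0})^ℕ` (here `0` is the extra point `Sum.inr ()`) which either consist of a
finite chain `(x₀,...,x_N, 0, 0, ...)` with `x_i ∈ U`, `σ(x_i) = x_{i-1}` for
`1 ≤ i ≤ N` and `x_N ∉ σ(U)`, or of an infinite chain `(x₀, x₁, ...)` with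
`σ(x_i) = x_{i-1}` for all `i ≥ 1`. -/
def SigmaExt {X : Type*} (U : Set X) (σ : U → X) : Set (ℕ → X ⊕ Unit) :=
  {y | (∃ N : ℕ,
          (∀ i : ℕ, 1 ≤ i → i ≤ N →
            ∃ u : U, y i = Sum.inl (u : X) ∧ y (i - 1) = Sum.inl (σ u)) ∧
          (∃ xN : X, y N = Sum.inl xN ∧ xN ∉ Set.range σ) ∧
          (∀ i : ℕ, N < i → y i = Sum.inr ()))
      ∨ (∀ i : ℕ, 1 ≤ i →
          ∃ u : U, y i = Sum.inl (u : X) ∧ y (i - 1) = Sum.inl (σ u))}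

/-- if `σ : U → X` is moreover injective, then
`Φ : X̃ → X`, `Φ(x₀, x₁, ...) = x₀`, is a homeomorphism. -/
theorem sigmaExt_proj_homeomorph_of_injective {X : Type*} [TopologicalSpace X]
    [CompactSpace X] [T2Space X] (U : Set X) (hU : IsClopen U) (σ : U → X)
    (hσ : Continuous σ) (hopen : IsOpen (Set.range σ))
    (hinj : Function.Injective σ) :
    ∃ e : SigmaExt U σ ≃ₜ X, ∀ y : SigmaExt U σ, Sum.inl (e y) = y.1 0 := by
  
  classical
  haveI : CompactSpace U := isCompact_iff_compactSpace.mp hU.isClosed.isCompact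
  have hrclosed : IsClosed (Set.range σ) := (isCompact_range hσ).isClosed
  have hco : Continuous (Equiv.ofInjective σ hinj) := by
    exact
      (hσ.subtype_mk fun a : U => Set.mem_range_self a :
        Continuous fun a : U => (⟨σ a, Set.mem_range_self a⟩ : Set.range σ))
  let eU : U ≃ₜ Set.range σ := hco.homeoOfEquivCompactToT2
  have heU : ∀ u : U, eU u = ⟨σ u, Set.mem_range_self u⟩ := fun u => rfl
  have heUsymm : ∀ (u : U) (h : σ u ∈ Set.range σ), eU.symm ⟨σ u, h⟩ = u := by
    intro u h
    have : (⟨σ u, h⟩ : Set.range σ) = eU u := rfl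
    rw [this, Homeomorph.symm_apply_apply]
  -- the step function
  set g : X → X ⊕ Unit :=
    fun x => if h : x ∈ Set.range σ then Sum.inl ((eU.symm ⟨x, h⟩ : U) : X)
      else Sum.inr () with hg_def
  have hg : Continuous g := by
    rw [continuous_iff_continuousAt]
    intro x
    by_cases hx : x ∈ Set.range σ
    · have hcont : ContinuousOn g (Set.range σ) := by
        rw [continuousOn_iff_continuous_restrict]
        have hrw : (Set.range σ).domRestrict g
            = fun p : Set.range σ => Sum.inl ((eU.symm p : U) : X) := by
          funext p
          simp only [Set.domRestrict_apply, hg_def, p.2, dif_pos]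
        rw [hrw]
        exact continuous_inl.comp (continuous_subtype_val.comp eU.symm.continuous)
      exact hcont.continuousAt (hopen.mem_nhds hx)
    · have hcont : ContinuousOn g (Set.range σ)ᶜ := by
        apply (continuousOn_const (c := Sum.inr ())).congr
        intro y hy
        simp only [hg_def, dif_neg (Set.mem_compl_iff _ _ |>.mp hy)]
      exact hcont.continuousAt (hrclosed.isOpen_compl.mem_nhds hx)
  set F : X ⊕ Unit → X ⊕ Unit := Sum.elim g (fun _ => Sum.inr ()) with hF_def
  have hF : Continuous F := hg.sumElim continuous_const
  have hF_inr : ∀ u : Unit, F (Sum.inr u) = Sum.inr () := fun _ => rfl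
  have hF_mem : ∀ (x : X) (h : x ∈ Set.range σ),
      F (Sum.inl x) = Sum.inl ((eU.symm ⟨x, h⟩ : U) : X) := by
    intro x h; simp only [hF_def, Sum.elim_inl, hg_def, dif_pos h]
  have hF_not : ∀ (x : X), x ∉ Set.range σ → F (Sum.inl x) = Sum.inr () := by
    intro x h; simp only [hF_def, Sum.elim_inl, hg_def, dif_neg h]
  have hF_sigma : ∀ u : U, F (Sum.inl (σ u)) = Sum.inl (u : X) := by
    intro u
    rw [hF_mem (σ u) (Set.mem_range_self u), heUsymm]
  -- step lemma
  have hstep : ∀ (a : X ⊕ Unit) (z : X), F a = Sum.inl z →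
      ∃ u : U, (u : X) = z ∧ a = Sum.inl (σ u) := by
    intro a z hz
    cases a with
    | inr u => simp [hF_inr] at hz
    | inl w =>
      by_cases hw : w ∈ Set.range σ
      · refine ⟨eU.symm ⟨w, hw⟩, ?_, ?_⟩
        · rw [hF_mem w hw] at hz
          exact Sum.inl.inj hz
        · have : eU (eU.symm ⟨w, hw⟩) = ⟨w, hw⟩ := eU.apply_symm_apply _
          rw [heU] at this
          have := congrArg Subtype.val this
          simp only at this
          rw [this]
      · rw [hF_not w hw] at hz; exact absurd hz (by simp)
  set Ψ : X → ℕ → X ⊕ Unit := fun x i => F^[i] (Sum.inl x) with hΨ_def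
  have hΨ0 : ∀ x, Ψ x 0 = Sum.inl x := fun _ => rfl
  have hΨsucc : ∀ x i, Ψ x (i + 1) = F (Ψ x i) := by
    intro x i; simp only [hΨ_def, Function.iterate_succ_apply']
  -- chain property of Ψ
  have hchain : ∀ (x : X) (i : ℕ), 1 ≤ i → ∀ z : X, Ψ x i = Sum.inl z →
      ∃ u : U, Ψ x i = Sum.inl (u : X) ∧ Ψ x (i - 1) = Sum.inl (σ u) := by
    intro x i hi z hz
    obtain ⟨j, rfl⟩ : ∃ j, i = j + 1 := ⟨i - 1, (Nat.succ_pred_eq_of_pos hi).symm⟩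
    rw [hΨsucc] at hz
    obtain ⟨u, hu1, hu2⟩ := hstep _ _ hz
    exact ⟨u, by rw [hΨsucc, hu2, hF_sigma], by simpa using hu2⟩
  -- membership
  have hmem : ∀ x, Ψ x ∈ SigmaExt U σ := by
    intro x
    by_cases hinf : ∀ i, ∃ z, Ψ x i = Sum.inl z
    · right
      intro i hi
      obtain ⟨z, hz⟩ := hinf i
      exact hchain x i hi z hz
    · left
      push_neg at hinf
      have hex : ∃ i, Ψ x i = Sum.inr () := by
        obtain ⟨i, hi⟩ := hinf
        refine ⟨i, ?_⟩
        cases h : Ψ x i with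
        | inl z => exact absurd h (hi z)
        | inr u => rfl
      set k := Nat.find hex with hk_def
      have hk : Ψ x k = Sum.inr () := Nat.find_spec hex
      have hkpos : 1 ≤ k := by
        rcases Nat.eq_zero_or_pos k with h0 | h1
        · rw [h0, hΨ0] at hk; exact absurd hk (by simp)
        · exact h1
      have hlt : ∀ i, i < k → ∃ z, Ψ x i = Sum.inl z := by
        intro i hi
        cases h : Ψ x i with
        | inl z => exact ⟨z, rfl⟩
        | inr u => exact absurd h (Nat.find_min hex hi)
      refine ⟨k - 1, ?_, ?_, ?_⟩
      · intro i hi1 hi2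
        obtain ⟨z, hz⟩ := hlt i (lt_of_le_of_lt hi2 (Nat.sub_lt hkpos one_pos))
        exact hchain x i hi1 z hz
      · obtain ⟨z, hz⟩ := hlt (k - 1) (Nat.sub_lt hkpos one_pos)
        refine ⟨z, hz, ?_⟩
        intro hzr
        have : Ψ x k = Sum.inl ((eU.symm ⟨z, hzr⟩ : U) : X) := by
          have : Ψ x ((k - 1) + 1) = F (Ψ x (k - 1)) := hΨsucc x (k - 1)
          rw [Nat.sub_add_cancel hkpos] at this
          rw [this, hz, hF_mem z hzr]
        rw [hk] at this; exact absurd this (by simp)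
      · intro i hi
        have h1 : k - 1 + 1 = k := Nat.sub_add_cancel hkpos
        have h2 : k ≤ i := by omega
        obtain ⟨j, rfl⟩ := Nat.exists_eq_add_of_le h2
        clear hi
        induction j with
        | zero => simpa using hk
        | succ m ih =>
          have : Ψ x (k + (m + 1)) = F (Ψ x (k + m)) := hΨsucc x (k + m)
          rw [this, ih (by omega), hF_inr]
  -- uniqueness
  have hun : ∀ y ∈ SigmaExt U σ, ∀ x : X, y 0 = Sum.inl x → ∀ i, y i = Ψ x i := by
    intro y hy x hx0 i
    induction i with
    | zero => rw [hΨ0, hx0]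
    | succ n ih =>
      rcases hy with ⟨N, hNc, ⟨xN, hxN, hxNr⟩, hNz⟩ | hinf
      · by_cases hle : n + 1 ≤ N
        · obtain ⟨u, hu1, hu2⟩ := hNc (n + 1) (by omega) hle
          simp only [Nat.add_sub_cancel] at hu2
          rw [hΨsucc, ← ih, hu2, hF_sigma, hu1]
        · by_cases hn : n = N
          · subst hn
            rw [hNz (n + 1) (by omega), hΨsucc, ← ih, hxN, hF_not xN hxNr]
          · have hNn : N < n := by omega
            rw [hNz (n + 1) (by omega), hΨsucc, ← ih, hNz n hNn, hF_inr]
      · obtain ⟨u, hu1, hu2⟩ := hinf (n + 1) (by omega)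
        simp only [Nat.add_sub_cancel] at hu2
        rw [hΨsucc, ← ih, hu2, hF_sigma, hu1]
  -- y 0 is always inl
  have hzero : ∀ y ∈ SigmaExt U σ, ∃ x : X, y 0 = Sum.inl x := by
    intro y hy
    rcases hy with ⟨N, hNc, ⟨xN, hxN, _⟩, _⟩ | hinf
    · rcases Nat.eq_zero_or_pos N with h0 | h1
      · exact ⟨xN, by rwa [h0] at hxN⟩
      · obtain ⟨u, _, hu2⟩ := hNc 1 le_rfl h1
        exact ⟨σ u, by simpa using hu2⟩
    · obtain ⟨u, _, hu2⟩ := hinf 1 le_rfl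
      exact ⟨σ u, by simpa using hu2⟩
  -- build the equiv
  let Ψ' : X → SigmaExt U σ := fun x => ⟨Ψ x, hmem x⟩
  have hΨ'inj : Function.Injective Ψ' := by
    intro a b hab
    have : Ψ a 0 = Ψ b 0 := by
      have := congrArg Subtype.val hab
      exact congrFun this 0
    rw [hΨ0, hΨ0] at this
    exact Sum.inl.inj this
  have hΨ'surj : Function.Surjective Ψ' := by
    intro y
    obtain ⟨x, hx⟩ := hzero y.1 y.2
    refine ⟨x, ?_⟩
    apply Subtype.ext
    funext i
    exact (hun y.1 y.2 x hx i).symm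
  let e0 : X ≃ SigmaExt U σ := Equiv.ofBijective Ψ' ⟨hΨ'inj, hΨ'surj⟩
  have hΨ'cont : Continuous Ψ' := by
    apply Continuous.subtype_mk
    apply continuous_pi
    intro i
    exact (hF.iterate i).comp continuous_inl
  have he0cont : Continuous e0 := hΨ'cont
  let h : X ≃ₜ SigmaExt U σ := he0cont.homeoOfEquivCompactToT2
  refine ⟨h.symm, fun y => ?_⟩
  have hy : h (h.symm y) = y := h.apply_symm_apply y
  have hcoe : ∀ x : X, (h x : SigmaExt U σ) = Ψ' x := fun _ => rfl
  calc Sum.inl (h.symm y) = (Ψ' (h.symm y)).1 0 := (hΨ0 _).symm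
    _ = y.1 0 := by rw [← hcoe, hy]
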